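/- arXiv:math/0612472 — 3 statements merged into one kernel-verified Lean document; each statement's English description precedes it below -/
import Mathlib

section
/- The function x(t) = 1 − (u(t) − 1)/t, where u(t) = f⁻¹(t − 1 − π/2) and f(s) = √(s² − 1) + arcsin(1/s), is strictly decreasing on [π + 1, 5] (its derivative is negative there). -/
noncomputable section

open Real

/-- `f(s) = √(s² − 1) + arcsin(1/s)`. -/
def fDS (s : ℝ) : ℝ := Real.sqrt (s ^ 2 - 1) + Real.arcsin (1 / s)

/-- The inverse of `f` on `[1, ∞)`. -/
def fDSInv : ℝ → ℝ := Function.invFunOn fDS (Set.Ici 1)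

/-- `u(t) = f⁻¹(t − 1 − π/2)`. -/
def uFun (t : ℝ) : ℝ := fDSInv (t - 1 - π / 2)

/-- `x(t) = 1 − (u(t) − 1)/t`. -/
def xFun (t : ℝ) : ℝ := 1 - (uFun t - 1) / t

lemma hasDerivAt_fDS {s : ℝ} (hs : 1 < s) :
    HasDerivAt fDS (Real.sqrt (s ^ 2 - 1) / s) s := by
  have hs0 : (0:ℝ) < s := by linarith
  have h1 : (0:ℝ) < s ^ 2 - 1 := by nlinarith
  have hsqpos : 0 < Real.sqrt (s ^ 2 - 1) := Real.sqrt_pos.mpr h1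
  have hA : HasDerivAt (fun x : ℝ => Real.sqrt (x ^ 2 - 1))
      (1 / (2 * Real.sqrt (s ^ 2 - 1)) * (2 * s ^ 1)) s :=
    (Real.hasDerivAt_sqrt h1.ne').comp s (((hasDerivAt_pow 2 s)).sub_const 1)
  have hinv : HasDerivAt (fun x : ℝ => 1 / x) (-(s ^ 2)⁻¹) s := by
    simpa [one_div] using hasDerivAt_inv hs0.ne'
  have hlt : 1 / s < 1 := by rw [div_lt_one hs0]; exact hs
  have hgt : (0:ℝ) < 1 / s := by positivity
  have hB : HasDerivAt (fun x : ℝ => Real.arcsin (1 / x))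
      (1 / Real.sqrt (1 - (1 / s) ^ 2) * -(s ^ 2)⁻¹) s :=
    (Real.hasDerivAt_arcsin (by linarith) hlt.ne).comp s hinv
  have key : Real.sqrt (1 - (1 / s) ^ 2) = Real.sqrt (s ^ 2 - 1) / s := by
    rw [show 1 - (1 / s) ^ 2 = (s ^ 2 - 1) / s ^ 2 by field_simp,
      Real.sqrt_div h1.le, Real.sqrt_sq hs0.le]
  refine (hA.add hB).congr_deriv ?_
  symm
  rw [key]
  have h2 : Real.sqrt (s ^ 2 - 1) ^ 2 = s ^ 2 - 1 := Real.sq_sqrt h1.le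
  field_simp
  linear_combination h2

lemma continuousOn_fDS : ContinuousOn fDS (Set.Ici 1) := by
  apply ContinuousOn.add
  · exact (Real.continuous_sqrt.comp (by continuity)).continuousOn
  · exact Real.continuous_arcsin.comp_continuousOn <|
      ContinuousOn.div continuousOn_const continuousOn_id
        fun x hx => by simp only [Set.mem_Ici] at hx; intro h; simp [h] at hx; linarith

lemma strictMonoOn_fDS : StrictMonoOn fDS (Set.Ici 1) := by
  apply strictMonoOn_of_hasDerivWithinAt_pos (convex_Ici 1) continuousOn_fDS
    (f' := fun s => Real.sqrt (s ^ 2 - 1) / s)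
  · intro x hx
    rw [interior_Ici] at hx
    exact (hasDerivAt_fDS hx).hasDerivWithinAt
  · intro x hx
    rw [interior_Ici] at hx
    have h1 : (0:ℝ) < x ^ 2 - 1 := by nlinarith [Set.mem_Ioi.mp hx]
    have : (1:ℝ) < x := hx
    positivity

/-- `f(s) - s` is strictly decreasing on `[1, ∞)`. -/
lemma strictAntiOn_fDS_sub : StrictAntiOn (fun s => fDS s - s) (Set.Ici 1) := by
  apply strictAntiOn_of_hasDerivWithinAt_neg (convex_Ici 1)
    (continuousOn_fDS.sub continuousOn_id)
    (f' := fun s => Real.sqrt (s ^ 2 - 1) / s - 1)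
  · intro x hx
    rw [interior_Ici] at hx
    exact ((hasDerivAt_fDS hx).sub (hasDerivAt_id x)).hasDerivWithinAt
  · intro x hx
    rw [interior_Ici] at hx
    have hx1 : (1:ℝ) < x := hx
    have h1 : (0:ℝ) ≤ x ^ 2 - 1 := by nlinarith
    have hx0 : (0:ℝ) < x := by linarith
    have : Real.sqrt (x ^ 2 - 1) < x := (Real.sqrt_lt' hx0).mpr (by nlinarith)
    have := (div_lt_one hx0).mpr this
    linarith

lemma fDS_one : fDS 1 = π / 2 := by
  simp [fDS, Real.arcsin_one]

lemma uFun_spec {t : ℝ} (ht : t ∈ Set.Icc (π + 1) 5) :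
    uFun t ∈ Set.Ici (1:ℝ) ∧ fDS (uFun t) = t - 1 - π / 2 := by
  obtain ⟨ht1, ht2⟩ := ht
  have hπ : (3:ℝ) < π := by linarith [Real.pi_gt_three]
  have hy1 : π / 2 ≤ t - 1 - π / 2 := by linarith
  have hy2 : t - 1 - π / 2 ≤ fDS 5 := by
    have h4 : (4:ℝ) ≤ Real.sqrt 24 := by
      rw [show (4:ℝ) = Real.sqrt 16 by
        rw [show (16:ℝ) = 4 ^ 2 by norm_num, Real.sqrt_sq]; norm_num]
      exact Real.sqrt_le_sqrt (by norm_num)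
    have harc : 0 ≤ Real.arcsin (1 / 5) := Real.arcsin_nonneg.mpr (by norm_num)
    have h5 : fDS 5 = Real.sqrt 24 + Real.arcsin (1 / 5) := by norm_num [fDS]
    rw [h5]; linarith
  have hex : ∃ s ∈ Set.Ici (1:ℝ), fDS s = t - 1 - π / 2 := by
    have := intermediate_value_Icc (by norm_num : (1:ℝ) ≤ 5)
      (continuousOn_fDS.mono (Set.Icc_subset_Ici_self))
    have hmem : t - 1 - π / 2 ∈ Set.Icc (fDS 1) (fDS 5) := by
      rw [fDS_one]; exact ⟨hy1, hy2⟩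
    obtain ⟨s, hs, hfs⟩ := this hmem
    exact ⟨s, hs.1, hfs⟩
  exact ⟨Function.invFunOn_mem hex, Function.invFunOn_eq hex⟩

/-- The function `x(t) = 1 − (u(t) − 1)/t`, with
`u(t) = f⁻¹(t − 1 − π/2)` and `f(s) = √(s² − 1) + arcsin(1/s)`, is strictly
decreasing on `[π + 1, 5]`. -/
theorem xFun_strictAntiOn : StrictAntiOn xFun (Set.Icc (π + 1) 5) := by
  intro t₁ ht₁ t₂ ht₂ hlt
  have hπ : (3:ℝ) < π := by linarith [Real.pi_gt_three]
  obtain ⟨hu₁mem, hu₁⟩ := uFun_spec ht₁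
  obtain ⟨hu₂mem, hu₂⟩ := uFun_spec ht₂
  set u₁ := uFun t₁
  set u₂ := uFun t₂
  have h1u₁ : (1:ℝ) ≤ u₁ := hu₁mem
  have h1u₂ : (1:ℝ) ≤ u₂ := hu₂mem
  have ht₁pos : (0:ℝ) < t₁ := by have := ht₁.1; linarith
  have ht₂pos : (0:ℝ) < t₂ := by have := ht₂.1; linarith
  -- u₁ < u₂
  have hu12 : u₁ < u₂ := by
    by_contra h
    push_neg at h
    have := strictMonoOn_fDS.monotoneOn hu₂mem hu₁mem h
    rw [hu₁, hu₂] at this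
    linarith
  -- u₂ - u₁ > t₂ - t₁
  have hgrow : t₂ - t₁ < u₂ - u₁ := by
    have := strictAntiOn_fDS_sub hu₁mem hu₂mem hu12
    simp only at this
    rw [hu₁, hu₂] at this
    linarith
  -- u₁ < t₁ + 1
  have hbound : u₁ < t₁ + 1 := by
    by_contra h
    push_neg at h
    have hmem : t₁ + 1 ∈ Set.Ici (1:ℝ) := by simp; linarith
    have hle := strictMonoOn_fDS.monotoneOn hmem hu₁mem h
    rw [hu₁] at hle
    have hfval : t₁ < fDS (t₁ + 1) := by
      unfold fDS
      have harc : 0 ≤ Real.arcsin (1 / (t₁ + 1)) := Real.arcsin_nonneg.mpr (by positivity)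
      have hsq : t₁ < Real.sqrt ((t₁ + 1) ^ 2 - 1) := by
        rw [show (t₁ + 1) ^ 2 - 1 = t₁ ^ 2 + 2 * t₁ by ring]
        exact (Real.lt_sqrt ht₁pos.le).mpr (by nlinarith)
      linarith
    linarith
  -- conclude
  have key : (u₁ - 1) * t₂ < (u₂ - 1) * t₁ := by
    nlinarith [mul_lt_mul_of_pos_left hgrow ht₁pos,
      mul_le_mul_of_nonneg_right (show u₁ - 1 ≤ t₁ by linarith)
        (show (0:ℝ) ≤ t₂ - t₁ by linarith)]
  have hdiv : (u₁ - 1) / t₁ < (u₂ - 1) / t₂ := by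
    rw [div_lt_div_iff₀ ht₁pos ht₂pos]; linarith
  show 1 - (u₂ - 1) / t₂ < 1 - (u₁ - 1) / t₁
  linarith
end
end

section
/- Let t ∈ [π + 1, 5], ψ = arcsin(1/t), q ∈ [0, 1.32], and set x_Q = (t + 1)/(t + g_ψ(q)) with g_ψ(s) = e^{s·tan ψ}·cos ψ / cos(ψ − s). Then q + (cot ψ / 2)·ln x_Q < 0.9. -/
noncomputable section

open Real

/-- `g_ψ(s) = e^{s·tan ψ}·cos ψ / cos(ψ − s)`. -/
def gFun (ψ s : ℝ) : ℝ := Real.exp (s * Real.tan ψ) * Real.cos ψ / Real.cos (ψ - s)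

/-- Auxiliary purely polynomial inequality. -/
lemma aux_poly (q S C : ℝ) (hq9 : 0.9 ≤ q) (hq2 : q ≤ 1.32) (hSlb : 0.2 ≤ S)
    (hSub : S ≤ 0.2415) (hClb : 0.97 ≤ C) (hCub : C ≤ 1) (hC2 : C ^ 2 = 1 - S ^ 2) :
    0 < (C - 2 * (q - 0.9) * S) * (C + q * S / 2) ^ 2
      - (C + 2 * (q - 0.9)) * (C * ((1.5708 - q) * C + S)) := by
  rcases le_total q 1.11 with h | h
  · nlinarith [sq_nonneg (q-1.0), mul_nonneg (sub_nonneg.2 hq9) (sub_nonneg.2 hSlb),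
      mul_nonneg (sub_nonneg.2 hq9) (sub_nonneg.2 hClb), sq_nonneg (S-0.22),
      mul_nonneg (sub_nonneg.2 hSlb) (sub_nonneg.2 hClb), sq_nonneg (C-0.97),
      mul_nonneg (sub_nonneg.2 h) (sub_nonneg.2 hSlb),
      mul_nonneg (sub_nonneg.2 h) (sub_nonneg.2 hClb)]
  · nlinarith [sq_nonneg (q-1.22), mul_nonneg (sub_nonneg.2 h) (sub_nonneg.2 hSlb),
      mul_nonneg (sub_nonneg.2 h) (sub_nonneg.2 hClb), sq_nonneg (S-0.2415),
      mul_nonneg (sub_nonneg.2 hSlb) (sub_nonneg.2 hClb), sq_nonneg (C-0.97),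
      mul_nonneg (sub_nonneg.2 hSub) (sub_nonneg.2 hClb),
      mul_nonneg (sub_nonneg.2 hSub) (sub_nonneg.2 h),
      mul_nonneg (sub_nonneg.2 hq2) (sub_nonneg.2 h),
      mul_nonneg (sub_nonneg.2 hq2) (sub_nonneg.2 hSlb),
      mul_nonneg (by linarith : (0:ℝ) ≤ q) (sub_nonneg.2 hSlb)]

/-- Let `t ∈ [π + 1, 5]`, `ψ = arcsin(1/t)`, `q ∈ [0, 1.32]`,
and set `x_Q = (t + 1)/(t + g_ψ(q))`.  Then `q + (cot ψ / 2)·ln x_Q < 0.9`. -/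
theorem q_add_half_cot_log_lt (t : ℝ) (ht : t ∈ Set.Icc (π + 1) 5)
    (ψ : ℝ) (hψ : ψ = Real.arcsin (1 / t))
    (q : ℝ) (hq : q ∈ Set.Icc (0 : ℝ) 1.32) :
    q + Real.cot ψ / 2 * Real.log ((t + 1) / (t + gFun ψ q)) < 0.9 := by
  obtain ⟨ht1, ht2⟩ := ht
  obtain ⟨hq0, hq2⟩ := hq
  have hpi_lt : π < 3.141593 := pi_lt_d6
  have hpi_gt : (3.141592 : ℝ) < π := pi_gt_d6
  have ht0 : (0:ℝ) < t := by linarith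
  set S := Real.sin ψ with hSdef
  set C := Real.cos ψ with hCdef
  have hS : S = 1 / t := by
    have h1 : (0:ℝ) ≤ 1 / t := by positivity
    have h2 : 1 / t ≤ 1 := by rw [div_le_one ht0]; linarith
    rw [hSdef, hψ, Real.sin_arcsin (by linarith) h2]
  have hSt : S * t = 1 := by rw [hS]; field_simp
  have hSlb : (0.2 : ℝ) ≤ S := by
    rw [hS, le_div_iff₀ ht0]; linarith
  have hSub : S ≤ (0.2415 : ℝ) := by
    rw [hS, div_le_iff₀ ht0]; nlinarith
  have hSpos : 0 < S := by linarith
  have hCpos : 0 < C := by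
    rw [hCdef, hψ, Real.cos_arcsin]
    have h3 : 1 / t ≤ 1 / 4 := by rw [div_le_div_iff₀ ht0]; linarith; norm_num
    have h4 : (0:ℝ) ≤ 1 / t := by positivity
    have : (0:ℝ) < 1 - (1/t)^2 := by nlinarith
    positivity
  have hC2 : C ^ 2 = 1 - S ^ 2 := by
    have h5 := Real.sin_sq_add_cos_sq ψ
    rw [← hSdef, ← hCdef] at h5; linarith
  have hCub : C ≤ 1 := Real.cos_le_one ψ
  have hClb : (0.97 : ℝ) ≤ C := by nlinarith
  -- bounds on ψ
  have hψ0 : 0 ≤ ψ := by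
    rw [hψ]; exact Real.arcsin_nonneg.2 (by positivity)
  have hψub : ψ < π / 2 := by
    rw [hψ]; exact Real.arcsin_lt_pi_div_two.2 (by rw [div_lt_one ht0]; linarith)
  have hcosu_pos : 0 < Real.cos (ψ - q) :=
    Real.cos_pos_of_mem_Ioo ⟨by nlinarith, by nlinarith⟩
  set g := gFun ψ q with hgdef
  have hgpos : 0 < g := by
    rw [hgdef]; unfold gFun
    positivity
  have hcosu : Real.cos (ψ - q) = C * Real.cos q + S * Real.sin q := Real.cos_sub ψ q
  have hCT : C * Real.tan ψ = S := by
    rw [Real.tan_eq_sin_div_cos, ← hSdef, ← hCdef]; field_simp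
  have hT0 : 0 ≤ Real.tan ψ := by
    rw [Real.tan_eq_sin_div_cos]; positivity
  have hgcos : g * Real.cos (ψ - q) = Real.exp (q * Real.tan ψ) * C := by
    rw [hgdef]; unfold gFun; field_simp; rfl
  have hsinq_le : Real.sin q ≤ q := by
    rcases eq_or_lt_of_le hq0 with h | h
    · simp [← h]
    · exact (Real.sin_lt h).le
  have hg1 : 1 ≤ g := by
    have h1 : Real.cos (ψ - q) ≤ C + q * S := by
      rw [hcosu]
      have i1 := mul_le_mul_of_nonneg_left (Real.cos_le_one q) hCpos.le
      have i2 := mul_le_mul_of_nonneg_left hsinq_le hSpos.le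
      linarith only [i1, i2]
    have e : (q * Real.tan ψ + 1) * C = C + q * S := by linear_combination q * hCT
    have h2 : C + q * S ≤ Real.exp (q * Real.tan ψ) * C := by
      have h3 := mul_le_mul_of_nonneg_right (Real.add_one_le_exp (q * Real.tan ψ)) hCpos.le
      linarith only [h3, e]
    nlinarith only [hgcos, hcosu_pos, h1, h2]
  have htg : 0 < t + g := by linarith
  have hcot : Real.cot ψ = C / S := Real.cot_eq_cos_div_sin ψ
  have hcotpos : 0 < Real.cot ψ := by rw [hcot]; positivity
  have hxpos : 0 < (t + 1) / (t + g) := by positivity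
  rcases lt_or_ge q 0.9 with hq9 | hq9
  · -- easy case : log ≤ 0
    have hlog : Real.log ((t + 1) / (t + g)) ≤ 0 := by
      apply Real.log_nonpos hxpos.le
      rw [div_le_one htg]; linarith
    have := mul_nonneg hcotpos.le (neg_nonneg.2 hlog)
    nlinarith only [this, hq9]
  · -- hard case
    -- exp lower bound
    have hexp : (1 + q * Real.tan ψ / 2) ^ 2 ≤ Real.exp (q * Real.tan ψ) := by
      have h1 : q * Real.tan ψ / 2 + 1 ≤ Real.exp (q * Real.tan ψ / 2) :=
        Real.add_one_le_exp _
      have h2 : Real.exp (q * Real.tan ψ / 2) * Real.exp (q * Real.tan ψ / 2)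
          = Real.exp (q * Real.tan ψ) := by
        rw [← Real.exp_add]; ring_nf
      have h3 : (0:ℝ) ≤ q * Real.tan ψ / 2 :=
        div_nonneg (mul_nonneg hq0 hT0) (by norm_num)
      nlinarith only [h1, h2, h3]
    -- cos upper bound
    have hcosq : Real.cos q ≤ 1.5708 - q := by
      have h1 : Real.sin (π/2 - q) < π/2 - q := Real.sin_lt (by linarith only [hpi_gt, hq2])
      rw [Real.sin_pi_div_two_sub] at h1
      linarith only [h1, hpi_lt]
    set D : ℝ := (1.5708 - q) * C + S with hDdef
    have hDpos : 0 < D := by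
      have h1 : (0:ℝ) ≤ (1.5708 - q) * C := mul_nonneg (by linarith) hCpos.le
      rw [hDdef]; linarith only [h1, hSpos]
    have hcosuD : Real.cos (ψ - q) ≤ D := by
      rw [hcosu, hDdef]
      have i1 := mul_le_mul_of_nonneg_left hcosq hCpos.le
      have i2 := mul_le_mul_of_nonneg_left (Real.sin_le_one q) hSpos.le
      linarith only [i1, i2]
    -- key quadratic lower bound :  (C + q*S/2)^2 ≤ C * g * D
    have key2 : (C + q * S / 2) ^ 2 ≤ C * (g * D) := by
      have e0 : C + q * S / 2 = C * (1 + q * Real.tan ψ / 2) := by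
        rw [mul_add, mul_one,
          show C * (q * Real.tan ψ / 2) = q * (C * Real.tan ψ) / 2 from by ring, hCT]
      have e2 : (C * (1 + q * Real.tan ψ / 2)) ^ 2
          ≤ C * (Real.exp (q * Real.tan ψ) * C) := by
        have h5 := mul_le_mul_of_nonneg_left hexp (sq_nonneg C)
        calc (C * (1 + q * Real.tan ψ / 2)) ^ 2
            = C ^ 2 * (1 + q * Real.tan ψ / 2) ^ 2 := by ring
          _ ≤ C ^ 2 * Real.exp (q * Real.tan ψ) := h5
          _ = C * (Real.exp (q * Real.tan ψ) * C) := by ring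
      have e4 : g * Real.cos (ψ - q) ≤ g * D :=
        mul_le_mul_of_nonneg_left hcosuD hgpos.le
      calc (C + q * S / 2) ^ 2 = (C * (1 + q * Real.tan ψ / 2)) ^ 2 := by rw [e0]
        _ ≤ C * (Real.exp (q * Real.tan ψ) * C) := e2
        _ = C * (g * Real.cos (ψ - q)) := by rw [← hgcos]
        _ ≤ C * (g * D) := mul_le_mul_of_nonneg_left e4 hCpos.le
    have hmono : 0 ≤ C - 2 * (q - 0.9) * S := by
      nlinarith only [hClb, hq2, hSub, hSlb, hq9]
    have hprod : 0 ≤ (C - 2 * (q - 0.9) * S) * (C * (g * D) - (C + q * S / 2) ^ 2) :=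
      mul_nonneg hmono (by linarith only [key2])
    have hP : 0 < (C - 2 * (q - 0.9) * S) * (C + q * S / 2) ^ 2
        - (C + 2 * (q - 0.9)) * (C * D) := by
      rw [hDdef]
      exact aux_poly q S C hq9 hq2 hSlb hSub hClb hCub hC2
    have expand : (C * g - C - 2 * (q - 0.9) * (1 + S * g)) * (C * D)
        = (C - 2 * (q - 0.9) * S) * (C * (g * D) - (C + q * S / 2) ^ 2)
          + ((C - 2 * (q - 0.9) * S) * (C + q * S / 2) ^ 2
             - (C + 2 * (q - 0.9)) * (C * D)) := by ring
    have h6 : 0 < (C * g - C - 2 * (q - 0.9) * (1 + S * g)) * (C * D) := by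
      rw [expand]; linarith only [hprod, hP]
    have hT00 : 0 < C * g - C - 2 * (q - 0.9) * (1 + S * g) := by
      rcases mul_pos_iff.mp h6 with ⟨h, _⟩ | ⟨_, h⟩
      · exact h
      · exact absurd (mul_pos hCpos hDpos) (by linarith only [h])
    have key : 2 * S * (q - 0.9) * (t + g) < C * (g - 1) := by
      have e7 : 2 * S * (q - 0.9) * (t + g) = 2 * (q - 0.9) * (1 + S * g) := by
        linear_combination (2 * (q - 0.9)) * hSt
      rw [e7]; nlinarith only [hT00]
    -- finish
    have hlog : Real.log ((t + 1) / (t + g)) ≤ (t + 1) / (t + g) - 1 :=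
      Real.log_le_sub_one_of_pos hxpos
    have hfrac : Real.cot ψ / 2 * ((t + 1) / (t + g) - 1) < 0.9 - q := by
      rw [hcot]
      have h9 : (t + 1) / (t + g) - 1 = (1 - g) / (t + g) := by
        rw [div_sub_one htg.ne', show t + 1 - (t + g) = 1 - g from by ring]
      have e1 : C / S / 2 * ((1 - g) / (t + g)) = (C * (1 - g)) / (S * 2 * (t + g)) := by
        rw [div_div, div_mul_div_comm]
      rw [h9, e1, div_lt_iff₀ (by positivity)]
      linarith only [key]
    have h8 := mul_le_mul_of_nonneg_left hlog (le_of_lt (half_pos hcotpos))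
    linarith only [h8, hfrac]
end
end

section
/- Let t ∈ [π + 1, 5], ψ = arcsin(1/t), and let p, q ∈ [0, ψ + π/2) satisfy (t + 1)/(t + g_ψ(p)) ≥ x(t) and (t + 1)/(t + g_ψ(q)) ≥ x(t), where g_ψ(s) = e^{s·tan ψ}·cos ψ / cos(ψ − s), x(t) = 1 − (u(t) − 1)/t, u(t) = f⁻¹(t − 1 − π/2), and f(s) = √(s² − 1) + arcsin(1/s). Set x_P = (t + 1)/(t + g_ψ(p)), x_Q = (t + 1)/(t + g_ψ(q)), and γ = π/2 − √(t² − 1)·ln √(x_Q/x_P). Then q < γ < π − p. -/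
set_option maxHeartbeats 1000000

noncomputable section

open Real

lemma my_sin_le {x : ℝ} (hx : 0 ≤ x) : Real.sin x ≤ x := by
  rcases eq_or_lt_of_le hx with h | h
  · simp [← h]
  · exact (Real.sin_lt h).le

lemma my_le_arcsin {y : ℝ} (h0 : 0 ≤ y) (h1 : y ≤ 1) : y ≤ Real.arcsin y := by
  have hz : 0 ≤ Real.arcsin y := Real.arcsin_nonneg.mpr h0
  have := my_sin_le hz
  rwa [Real.sin_arcsin (by linarith) h1] at this

lemma sq_le_imp {u V : ℝ} (hu : 0 ≤ u) (hV : 0 < V) (h : u ^ 2 ≤ V ^ 2) : u ≤ V := by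
  nlinarith

/-- initial bootstrap step -/
lemma u_upper0 {u Tq V : ℝ} (hu : 1 ≤ u) (h : Real.sqrt (u ^ 2 - 1) ≤ Tq - 1 / u)
    (hTq : 0 ≤ Tq) (hV : 1 + Tq ^ 2 ≤ V ^ 2) (hV0 : 0 < V) : u ≤ V := by
  have h1 : Real.sqrt (u ^ 2 - 1) ≤ Tq := by
    have : 0 < 1 / u := by positivity
    linarith
  have h2 : u ^ 2 - 1 ≤ Tq ^ 2 := by
    have := Real.sq_sqrt (show (0:ℝ) ≤ u ^ 2 - 1 by nlinarith)
    nlinarith [Real.sqrt_nonneg (u ^ 2 - 1)]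
  exact sq_le_imp (by linarith) hV0 (by nlinarith)

/-- bootstrap step -/
lemma u_upper {u Tq U V : ℝ} (hu : 1 ≤ u) (hU : u ≤ U)
    (h : Real.sqrt (u ^ 2 - 1) ≤ Tq - 1 / u)
    (hTU : 0 ≤ Tq - 1 / U) (hV : 1 + (Tq - 1 / U) ^ 2 ≤ V ^ 2) (hV0 : 0 < V) : u ≤ V := by
  have hU0 : 0 < U := by linarith
  have hinv : 1 / U ≤ 1 / u := one_div_le_one_div_of_le (by linarith) hU
  have h1 : Real.sqrt (u ^ 2 - 1) ≤ Tq - 1 / U := by linarith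
  have h2 : u ^ 2 - 1 ≤ (Tq - 1 / U) ^ 2 := by
    have := Real.sq_sqrt (show (0:ℝ) ≤ u ^ 2 - 1 by nlinarith)
    nlinarith [Real.sqrt_nonneg (u ^ 2 - 1)]
  exact sq_le_imp (by linarith) hV0 (by nlinarith)



lemma cos_psi_sub_pos {ψ s : ℝ} (hψ0 : 0 < ψ) (hψh : ψ < π / 2) (hs0 : 0 ≤ s)
    (hs1 : s < ψ + π / 2) : 0 < Real.cos (ψ - s) := by
  refine Real.cos_pos_of_mem_Ioo ⟨?_, ?_⟩ <;> [skip; skip] <;> linarith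

lemma gFun_eq {ψ s : ℝ} (h : Real.cos (ψ - s) ≠ 0) :
    Real.cos (ψ - s) * gFun ψ s = Real.exp (s * Real.tan ψ) * Real.cos ψ := by
  rw [gFun]; field_simp

lemma gFun_pos {ψ s : ℝ} (hψ0 : 0 < ψ) (hψh : ψ < π / 2) (hs0 : 0 ≤ s)
    (hs1 : s < ψ + π / 2) (hcψ : 0 < Real.cos ψ) : 0 < gFun ψ s := by
  rw [gFun]
  exact div_pos (mul_pos (Real.exp_pos _) hcψ) (cos_psi_sub_pos hψ0 hψh hs0 hs1)

lemma one_le_gFun {t c ψ s : ℝ} (ht0 : 0 < t) (hc0 : 0 < c)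
    (hψ0 : 0 < ψ) (hψh : ψ < π / 2)
    (hsin : Real.sin ψ = 1 / t) (hcos : Real.cos ψ = c / t) (htan : Real.tan ψ = 1 / c)
    (hs0 : 0 ≤ s) (hs1 : s < ψ + π / 2) : 1 ≤ gFun ψ s := by
  have hcoss : 0 < Real.cos (ψ - s) := cos_psi_sub_pos hψ0 hψh hs0 hs1
  have hcψ : 0 < Real.cos ψ := by rw [hcos]; positivity
  have hGeq := gFun_eq hcoss.ne'
  have hsinle : Real.sin s ≤ s := by
    rcases eq_or_lt_of_le hs0 with h | h
    · simp [← h]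
    · exact (Real.sin_lt h).le
  have hcs : Real.cos (ψ - s) ≤ Real.cos ψ + s / t := by
    rw [Real.cos_sub, hsin]
    have h1 : Real.cos ψ * Real.cos s ≤ Real.cos ψ := by
      nlinarith [Real.cos_le_one s, hcψ.le]
    have h2 : 1 / t * Real.sin s ≤ s / t := by
      rw [div_mul_eq_mul_div, one_mul, div_le_div_iff₀ ht0 ht0]
      nlinarith
    linarith
  have hexp : 1 + s * (1 / c) ≤ Real.exp (s * (1 / c)) := by
    have := Real.add_one_le_exp (s * (1 / c)); linarith
  have e1 : Real.cos ψ * (s * (1 / c)) = s / t := by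
    rw [hcos]; field_simp
  rw [htan] at hGeq
  have hkey : Real.cos (ψ - s) ≤ Real.exp (s * (1 / c)) * Real.cos ψ := by
    nlinarith [hcψ.le]
  nlinarith

/-- the quadratic discriminant step -/
lemma quad_neg {c1 c2 aa t1 Bb G : ℝ} (hc10 : 0 < c1) (haa0 : 0 < aa)
    (hG0 : 0 < G) (hcc : 2 < c1 * c2)
    (hdisc : (2 * t1 + c1 * c2 * Bb - 2 * c1 * aa) ^ 2 < 8 * (c1 * c2 - 2) * aa * t1 * c1) :
    2 * G * (t1 + G) - 2 * aa * c1 * (t1 + G) + c1 * c2 * (Bb - G) * G < 0 := by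
  nlinarith [sq_nonneg (2 * (c1 * c2 - 2) * G - (2 * t1 + c1 * c2 * Bb - 2 * c1 * aa))]

lemma B_facts {x t B G : ℝ} (ht0 : 0 < t) (hx0 : 0 < x) (hx1 : x ≤ 1)
    (hxB : x * (t + B) = t + 1) (hxG : x * (t + G) ≤ t + 1) : 1 ≤ B ∧ G ≤ B := by
  constructor <;> nlinarith

lemma mono_aux {t t2 w : ℝ} (h : t ≤ t2) (hw : 1 ≤ w) :
    (t + 1) * w - t ≤ (t2 + 1) * w - t2 := by nlinarith

lemma core (t c ψ x : ℝ) (t1 t2 c1 c2 xlo Bb rl aa : ℝ)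
    (htl : t1 ≤ t) (htu : t ≤ t2) (ht1 : 4 ≤ t1)
    (hc10 : 4 ≤ c1) (hcl : c1 ≤ c) (hcu : c ≤ c2)
    (hψ0 : 0 < ψ)
    (hsin : Real.sin ψ = 1 / t) (hcos : Real.cos ψ = c / t) (htan : Real.tan ψ = 1 / c)
    (hψc : ψ ≤ 1 / c)
    (hx0 : 0 < x) (hx1 : x ≤ 1) (hxlo : xlo ≤ x) (hxlo0 : 0 < xlo)
    (hBb : (t2 + 1) / xlo - t2 ≤ Bb)
    (hrl0 : 0 ≤ rl) (hrl : rl ≤ 1.570796 + c2 / 2 * (1 - 1 / xlo))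
    (haa : aa ≤ (1 + rl / (2 * c2)) ^ 2 * (c1 / t2)) (haa0 : 0 < aa)
    (hcc : 2 < c1 * c2)
    (hdisc : (2 * t1 + c1 * c2 * Bb - 2 * c1 * aa) ^ 2 < 8 * (c1 * c2 - 2) * aa * t1 * c1)
    (s : ℝ) (hs0 : 0 ≤ s) (hs1 : s < ψ + π / 2)
    (hG : x ≤ (t + 1) / (t + gFun ψ s)) :
    s + c / 2 * Real.log ((t + 1) / (t + gFun ψ s)) < π / 2 + c / 2 * Real.log x := by
  have hπ1 : (3.141592 : ℝ) < π := Real.pi_gt_d6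
  have ht0 : (0:ℝ) < t := by linarith
  have hc0 : (0:ℝ) < c := by linarith
  have hc20 : (0:ℝ) < c2 := by linarith
  have hψhalf : ψ < π / 2 := by
    have h1 : (1:ℝ) / c ≤ 1 / c1 := by
      apply one_div_le_one_div_of_le <;> linarith
    have h2 : (1:ℝ) / c1 ≤ 1 / 4 := by
      apply one_div_le_one_div_of_le <;> linarith
    linarith
  have hcoss : 0 < Real.cos (ψ - s) := cos_psi_sub_pos hψ0 hψhalf hs0 hs1
  have hcosψ : 0 < Real.cos ψ := by rw [hcos]; positivity
  set G := gFun ψ s with hGdef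
  have hG0 : 0 < G := gFun_pos hψ0 hψhalf hs0 hs1 hcosψ
  have hGeq : Real.cos (ψ - s) * G = Real.exp (s / c) * Real.cos ψ := by
    have := gFun_eq hcoss.ne'
    rw [htan] at this
    rw [hGdef, this, mul_one_div]
  have hG1 : 1 ≤ G := one_le_gFun ht0 hc0 hψ0 hψhalf hsin hcos htan hs0 hs1
  clear_value G
  have htG : 0 < t + G := by linarith
  -- B
  set B := (t + 1) / x - t with hBdef
  have hxB : x * (t + B) = t + 1 := by
    rw [hBdef]; field_simp; ring
  clear_value B
  obtain ⟨hB1, hGB⟩ := B_facts ht0 hx0 hx1 hxB ((le_div_iff₀ htG).mp hG)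
  have htB : 0 < t + B := by linarith
  have hBBb : B ≤ Bb := by
    have hw : 1 / x ≤ 1 / xlo := one_div_le_one_div_of_le hxlo0 hxlo
    have hw1 : 1 ≤ 1 / xlo := by
      rw [le_div_iff₀ hxlo0]; linarith
    have e1 : B = (t + 1) * (1 / x) - t := by rw [hBdef]; ring
    have e2 : (t + 1) * (1 / x) ≤ (t + 1) * (1 / xlo) :=
      mul_le_mul_of_nonneg_left hw (by linarith)
    have e3 : (t + 1) * (1 / xlo) - t ≤ (t2 + 1) * (1 / xlo) - t2 := mono_aux htu hw1
    have e4 : (t2 + 1) / xlo = (t2 + 1) * (1 / xlo) := by ring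
    rw [e4] at hBb
    linarith
  -- log rewrites
  have hxeq : x = (t + 1) / (t + B) := by
    rw [eq_div_iff htB.ne']
    linarith [hxB]
  have hlogx : Real.log x = Real.log (t + 1) - Real.log (t + B) := by
    rw [hxeq, Real.log_div (by linarith) (by linarith)]
  have hlogG : Real.log ((t + 1) / (t + G)) = Real.log (t + 1) - Real.log (t + G) := by
    rw [Real.log_div (by linarith) (by linarith)]
  have hlog1G : Real.log (t + 1) ≤ Real.log (t + G) :=
    Real.log_le_log (by linarith) (by linarith)
  have key : s < π / 2 + c / 2 * (Real.log (t + G) - Real.log (t + B)) := by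
    rcases lt_or_ge s (π / 2 + c / 2 * Real.log x) with hcase | hcase
    · have h2 := mul_le_mul_of_nonneg_left hlog1G (by positivity : (0:ℝ) ≤ c / 2)
      rw [hlogx] at hcase
      linarith
    · -- case 2
      have hlogxlb : 1 - 1 / x ≤ Real.log x := by
        have h := Real.log_le_sub_one_of_pos (show (0:ℝ) < x⁻¹ by positivity)
        rw [Real.log_inv] at h
        rw [one_div]
        linarith
      have hlogxle : Real.log x ≤ 0 := Real.log_nonpos (by linarith) hx1
      have hr0 : rl ≤ π / 2 + c / 2 * Real.log x := by
        have e1 : c2 / 2 * Real.log x ≤ c / 2 * Real.log x :=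
          mul_le_mul_of_nonpos_right (by linarith) hlogxle
        have e2 : c2 / 2 * (1 - 1 / x) ≤ c2 / 2 * Real.log x :=
          mul_le_mul_of_nonneg_left hlogxlb (by linarith)
        have e3 : 1 / x ≤ 1 / xlo := one_div_le_one_div_of_le hxlo0 hxlo
        have e4 : c2 / 2 * (1 - 1 / xlo) ≤ c2 / 2 * (1 - 1 / x) :=
          mul_le_mul_of_nonneg_left (by linarith) (by linarith)
        linarith
      have hsrl : rl ≤ s := le_trans hr0 hcase
      -- exp bound
      have hexp2 : (1 + rl / (2 * c2)) ^ 2 ≤ Real.exp (s / c) := by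
        have e1 : rl / (2 * c2) ≤ s / (2 * c) := by
          apply div_le_div₀ hs0 hsrl (by positivity)
          linarith
        have e2 : 1 + s / (2 * c) ≤ Real.exp (s / (2 * c)) := by
          have := Real.add_one_le_exp (s / (2 * c)); linarith
        have e3 : Real.exp (s / (2 * c)) ^ 2 = Real.exp (s / c) := by
          rw [sq, ← Real.exp_add]
          congr 1
          field_simp
          ring
        have h0 : (0:ℝ) ≤ 1 + rl / (2 * c2) := by positivity
        calc (1 + rl / (2 * c2)) ^ 2 ≤ (1 + s / (2 * c)) ^ 2 :=
            pow_le_pow_left₀ h0 (by linarith) 2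
          _ ≤ Real.exp (s / (2 * c)) ^ 2 := pow_le_pow_left₀ (by positivity) e2 2
          _ = Real.exp (s / c) := e3
      -- cos lower bound
      have hcψlb : c1 / t2 ≤ Real.cos ψ := by
        rw [hcos]
        exact div_le_div₀ hc0.le hcl (by linarith) htu
      have haaG : aa / G ≤ Real.cos (ψ - s) := by
        rw [div_le_iff₀ hG0]
        have e1 : (1 + rl / (2 * c2)) ^ 2 * (c1 / t2) ≤ Real.exp (s / c) * Real.cos ψ :=
          mul_le_mul hexp2 hcψlb (div_nonneg (by linarith) (by linarith)) (Real.exp_pos _).le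
        linarith [hGeq, haa]
      -- sin bound: s < ψ + π/2 - aa/G
      have hsb : s < ψ + π / 2 - aa / G := by
        have hz : 0 < ψ + π / 2 - s := by linarith
        have e1 : Real.sin (ψ + π / 2 - s) < ψ + π / 2 - s := Real.sin_lt hz
        have e2 : Real.sin (ψ + π / 2 - s) = Real.cos (ψ - s) := by
          rw [show ψ + π / 2 - s = π / 2 - (s - ψ) by ring, Real.sin_pi_div_two_sub,
            show s - ψ = -(ψ - s) by ring, Real.cos_neg]
        rw [e2] at e1
        linarith
      -- log bound
      have hloglb : Real.log (t + B) - Real.log (t + G) ≤ (B - G) / (t + G) := by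
        have e1 : Real.log ((t + B) / (t + G)) ≤ (t + B) / (t + G) - 1 :=
          Real.log_le_sub_one_of_pos (by positivity)
        rw [Real.log_div (by linarith) (by linarith)] at e1
        have e2 : (t + B) / (t + G) - 1 = (B - G) / (t + G) := by
          field_simp
          ring
        rw [e2] at e1
        exact e1
      -- final numeric inequality
      have hfin : ψ - aa / G + c / 2 * ((B - G) / (t + G)) < 0 := by
        have d1 : ψ ≤ 1 / c1 := by
          have h1 : (1:ℝ) / c ≤ 1 / c1 := by
            apply one_div_le_one_div_of_le <;> linarith
          linarith
        have d2 : c / 2 * ((B - G) / (t + G)) ≤ c2 / 2 * ((Bb - G) / (t1 + G)) := by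
          have e1 : (B - G) / (t + G) ≤ (Bb - G) / (t1 + G) :=
            div_le_div₀ (by linarith) (by linarith) (by linarith) (by linarith)
          have e2 : (0:ℝ) ≤ (B - G) / (t + G) := div_nonneg (by linarith) (by linarith)
          exact mul_le_mul (by linarith) e1 e2 (by linarith)
        have hE := quad_neg (by linarith : (0:ℝ) < c1) haa0 hG0 hcc hdisc
        have hFIN2 : 1 / c1 - aa / G + c2 / 2 * ((Bb - G) / (t1 + G)) < 0 := by
          have hden : 0 < 2 * c1 * G * (t1 + G) := by
            have : (0:ℝ) < c1 := by linarith
            positivity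
          have heq : 1 / c1 - aa / G + c2 / 2 * ((Bb - G) / (t1 + G)) =
              (2 * G * (t1 + G) - 2 * aa * c1 * (t1 + G) + c1 * c2 * (Bb - G) * G) /
                (2 * c1 * G * (t1 + G)) := by
            field_simp
          rw [heq]
          exact div_neg_of_neg_of_pos hE hden
        linarith
      have hc2log : c / 2 * (Real.log (t + B) - Real.log (t + G)) ≤
          c / 2 * ((B - G) / (t + G)) := mul_le_mul_of_nonneg_left hloglb (by linarith)
      linarith
  rw [hlogG, hlogx]
  linarith [key]








lemma c_bnds {t t1 t2 c c1 c2 : ℝ} (h4 : 4 ≤ t1) (htl : t1 ≤ t) (htu : t ≤ t2)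
    (hc2 : c ^ 2 = t ^ 2 - 1) (hc0 : 0 < c) (hc1 : 4 ≤ c1)
    (h3 : c1 ^ 2 ≤ t1 ^ 2 - 1) (h4' : t2 ^ 2 - 1 ≤ c2 ^ 2) (h5 : 0 ≤ c2) :
    c1 ≤ c ∧ c ≤ c2 := by constructor <;> nlinarith

lemma subcase (t c ψ p q u x : ℝ)
    (t1 t2 c1 c2 Tq U0 U1 U2 U3 xlo Bb rl aa : ℝ)
    (hcdef : Real.sqrt (t ^ 2 - 1) = c)
    (htl : t1 ≤ t) (htu : t ≤ t2)
    (hc2sq : c ^ 2 = t ^ 2 - 1) (hc0 : 0 < c)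
    (hψ0 : 0 < ψ) (hψhalf : ψ < π / 2)
    (hsin : Real.sin ψ = 1 / t) (hcos : Real.cos ψ = c / t) (htan : Real.tan ψ = 1 / c)
    (hψc : ψ ≤ 1 / c)
    (hu1 : 1 ≤ u)
    (hfu : Real.sqrt (u ^ 2 - 1) + Real.arcsin (1 / u) = t - 1 - π / 2)
    (hxdef : x = 1 - (u - 1) / t)
    (hp0 : 0 ≤ p) (hp1 : p < ψ + π / 2) (hq0 : 0 ≤ q) (hq1 : q < ψ + π / 2)
    (hxp : x ≤ (t + 1) / (t + gFun ψ p))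
    (hxq : x ≤ (t + 1) / (t + gFun ψ q))
    (hnum : (4 ≤ t1 ∧ 4 ≤ c1 ∧ c1 ^ 2 ≤ t1 ^ 2 - 1 ∧ t2 ^ 2 - 1 ≤ c2 ^ 2 ∧ 0 ≤ c2) ∧
      (t2 - 1 - 1.570796 ≤ Tq ∧ 1 ≤ Tq) ∧
      (1 + Tq ^ 2 ≤ U0 ^ 2 ∧ 1 ≤ U0 ∧ 0 ≤ Tq - 1 / U0 ∧
        1 + (Tq - 1 / U0) ^ 2 ≤ U1 ^ 2 ∧ 1 ≤ U1 ∧ 0 ≤ Tq - 1 / U1 ∧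
        1 + (Tq - 1 / U1) ^ 2 ≤ U2 ^ 2 ∧ 1 ≤ U2 ∧ 0 ≤ Tq - 1 / U2 ∧
        1 + (Tq - 1 / U2) ^ 2 ≤ U3 ^ 2 ∧ 1 ≤ U3) ∧
      (0 < xlo ∧ xlo ≤ 1 - (U3 - 1) / t1) ∧
      ((t2 + 1) / xlo - t2 ≤ Bb) ∧
      (0 ≤ rl ∧ rl ≤ 1.570796 + c2 / 2 * (1 - 1 / xlo)) ∧
      (aa ≤ (1 + rl / (2 * c2)) ^ 2 * (c1 / t2) ∧ 0 < aa) ∧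
      (2 < c1 * c2) ∧
      ((2 * t1 + c1 * c2 * Bb - 2 * c1 * aa) ^ 2 < 8 * (c1 * c2 - 2) * aa * t1 * c1)) :
    q < π / 2 - Real.sqrt (t ^ 2 - 1) *
        Real.log (Real.sqrt (((t + 1) / (t + gFun ψ q)) / ((t + 1) / (t + gFun ψ p)))) ∧
    π / 2 - Real.sqrt (t ^ 2 - 1) *
        Real.log (Real.sqrt (((t + 1) / (t + gFun ψ q)) / ((t + 1) / (t + gFun ψ p)))) <
      π - p := by
  obtain ⟨⟨n1, n2, n3, n4, n5⟩, ⟨nT1, nT2⟩,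
    ⟨m0, m0', m1, m2, m2', m3, m4, m4', m5, m6, m6'⟩,
    ⟨nx0, nx1⟩, nBb, ⟨nr0, nr1⟩, ⟨na1, na2⟩, ncc, ndisc⟩ := hnum
  have hπ1 : (3.141592 : ℝ) < π := Real.pi_gt_d6
  have ht0 : (0 : ℝ) < t := by linarith
  -- c bounds
  obtain ⟨hcl, hcu⟩ := c_bnds n1 htl htu hc2sq hc0 n2 n3 n4 n5
  -- u bootstrap
  have hu0 : (0:ℝ) < u := by linarith
  have harc : 1 / u ≤ Real.arcsin (1 / u) :=
    my_le_arcsin (by positivity) (by rw [div_le_one hu0]; linarith)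
  have hsq : Real.sqrt (u ^ 2 - 1) ≤ Tq - 1 / u := by
    have := Real.arcsin_le_pi_div_two (1 / u)
    linarith
  have hU0 : u ≤ U0 := u_upper0 hu1 hsq (by linarith) m0 (by linarith)
  have hU1 : u ≤ U1 := u_upper hu1 hU0 hsq m1 m2 (by linarith)
  have hU2 : u ≤ U2 := u_upper hu1 hU1 hsq m3 m4 (by linarith)
  have hU3 : u ≤ U3 := u_upper hu1 hU2 hsq m5 m6 (by linarith)
  -- x bounds
  have hx1 : x ≤ 1 := by
    rw [hxdef]
    have : 0 ≤ (u - 1) / t := div_nonneg (by linarith) ht0.le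
    linarith
  have hxlo : xlo ≤ x := by
    rw [hxdef]
    have : (u - 1) / t ≤ (U3 - 1) / t1 :=
      div_le_div₀ (by linarith) (by linarith) (by linarith) htl
    linarith
  have hx0 : 0 < x := lt_of_lt_of_le nx0 hxlo
  -- apply core
  have HQ := core t c ψ x t1 t2 c1 c2 xlo Bb rl aa htl htu n1 n2 hcl hcu hψ0
    hsin hcos htan hψc hx0 hx1 hxlo nx0 nBb nr0 nr1 na1 na2 ncc ndisc q hq0 hq1 hxq
  have HP := core t c ψ x t1 t2 c1 c2 xlo Bb rl aa htl htu n1 n2 hcl hcu hψ0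
    hsin hcos htan hψc hx0 hx1 hxlo nx0 nBb nr0 nr1 na1 na2 ncc ndisc p hp0 hp1 hxp
  -- assembly
  have hcosψ : 0 < Real.cos ψ := by rw [hcos]; positivity
  have hGp : 0 < gFun ψ p := gFun_pos hψ0 hψhalf hp0 hp1 hcosψ
  have hGq : 0 < gFun ψ q := gFun_pos hψ0 hψhalf hq0 hq1 hcosψ
  have hxP0 : 0 < (t + 1) / (t + gFun ψ p) := by positivity
  have hxQ0 : 0 < (t + 1) / (t + gFun ψ q) := by positivity
  have hlog : Real.log (Real.sqrt (((t + 1) / (t + gFun ψ q)) / ((t + 1) / (t + gFun ψ p)))) =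
      (Real.log ((t + 1) / (t + gFun ψ q)) - Real.log ((t + 1) / (t + gFun ψ p))) / 2 := by
    rw [Real.log_sqrt (div_nonneg hxQ0.le hxP0.le), Real.log_div hxQ0.ne' hxP0.ne']
  have hlxP : Real.log x ≤ Real.log ((t + 1) / (t + gFun ψ p)) := Real.log_le_log hx0 hxp
  have hlxQ : Real.log x ≤ Real.log ((t + 1) / (t + gFun ψ q)) := Real.log_le_log hx0 hxq
  have hmP := mul_le_mul_of_nonneg_left hlxP (by positivity : (0:ℝ) ≤ c / 2)
  have hmQ := mul_le_mul_of_nonneg_left hlxQ (by positivity : (0:ℝ) ≤ c / 2)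
  rw [hcdef, hlog]
  constructor
  · linarith [HQ, hmP]
  · linarith [HP, hmQ]

/-- Let `t ∈ [π + 1, 5]`, `ψ = arcsin(1/t)`, and let
`p, q ∈ [0, ψ + π/2)` satisfy `(t + 1)/(t + g_ψ(p)) ≥ x(t)` and
`(t + 1)/(t + g_ψ(q)) ≥ x(t)`.  Set `x_P = (t + 1)/(t + g_ψ(p))`,
`x_Q = (t + 1)/(t + g_ψ(q))` and `γ = π/2 − √(t² − 1)·ln √(x_Q/x_P)`.
Then `q < γ < π − p`. -/


theorem q_lt_gamma_lt_pi_sub_p (t : ℝ) (ht : t ∈ Set.Icc (π + 1) 5)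
    (ψ : ℝ) (hψ : ψ = Real.arcsin (1 / t))
    (p q : ℝ) (hp : p ∈ Set.Ico 0 (ψ + π / 2)) (hq : q ∈ Set.Ico 0 (ψ + π / 2))
    (hxp : xFun t ≤ (t + 1) / (t + gFun ψ p))
    (hxq : xFun t ≤ (t + 1) / (t + gFun ψ q)) :
    q < π / 2 - Real.sqrt (t ^ 2 - 1) *
        Real.log (Real.sqrt (((t + 1) / (t + gFun ψ q)) / ((t + 1) / (t + gFun ψ p)))) ∧
    π / 2 - Real.sqrt (t ^ 2 - 1) *
        Real.log (Real.sqrt (((t + 1) / (t + gFun ψ q)) / ((t + 1) / (t + gFun ψ p)))) <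
      π - p := by
  obtain ⟨ht1, ht2⟩ := ht
  have hπ1 : (3.141592 : ℝ) < π := Real.pi_gt_d6
  have hπ2 : π < 3.141593 := Real.pi_lt_d6
  have ht0 : (0:ℝ) < t := by linarith
  have htlo : (4.141592 : ℝ) ≤ t := by linarith
  set c := Real.sqrt (t ^ 2 - 1) with hcdef'
  have hcdef : Real.sqrt (t ^ 2 - 1) = c := rfl
  have hc2sq : c ^ 2 = t ^ 2 - 1 := Real.sq_sqrt (by nlinarith)
  have hc0 : 0 < c := Real.sqrt_pos.mpr (by nlinarith)
  -- ψ facts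
  have hinv1 : 1 / t ≤ 1 := by rw [div_le_one ht0]; linarith
  have hinv0 : 0 < 1 / t := by positivity
  have hsin : Real.sin ψ = 1 / t := by
    rw [hψ]; exact Real.sin_arcsin (by linarith) hinv1
  have hψ0 : 0 < ψ := by rw [hψ]; exact Real.arcsin_pos.mpr hinv0
  have hψhalf : ψ < π / 2 := by
    rw [hψ]
    exact Real.arcsin_lt_pi_div_two.mpr (by rw [div_lt_one ht0]; linarith)
  have hcos : Real.cos ψ = c / t := by
    rw [hψ, Real.cos_arcsin]
    rw [show 1 - (1 / t) ^ 2 = (c / t) ^ 2 by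
      field_simp
      linarith [hc2sq]]
    exact Real.sqrt_sq (by positivity)
  have htan : Real.tan ψ = 1 / c := by
    rw [Real.tan_eq_sin_div_cos, hsin, hcos]
    rw [div_div_div_eq]
    field_simp
  have hψc : ψ ≤ 1 / c := by
    have := Real.lt_tan hψ0 hψhalf
    rw [htan] at this
    linarith
  -- u facts
  have hcont : ContinuousOn fDS (Set.Icc 1 5) := by
    unfold fDS
    apply ContinuousOn.add
    · exact (Real.continuous_sqrt.comp (by continuity)).continuousOn
    · apply Real.continuous_arcsin.comp_continuousOn
      apply ContinuousOn.div continuousOn_const continuousOn_id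
      intro y hy
      have h1 : (1:ℝ) ≤ y := hy.1
      simp only [id_eq]
      intro h
      rw [h] at h1
      linarith
  have hf1 : fDS 1 = π / 2 := by
    unfold fDS
    norm_num [Real.arcsin_one]
  have hf5 : (4.8 : ℝ) ≤ fDS 5 := by
    unfold fDS
    have h1 : (4.8 : ℝ) ≤ Real.sqrt (5 ^ 2 - 1) := by
      rw [show (5:ℝ) ^ 2 - 1 = 24 by norm_num]
      rw [show (4.8:ℝ) = Real.sqrt (4.8 ^ 2) by rw [Real.sqrt_sq]; norm_num]
      apply Real.sqrt_le_sqrt; norm_num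
    have h2 : 0 ≤ Real.arcsin (1 / 5) := Real.arcsin_nonneg.mpr (by norm_num)
    linarith
  have hmem : t - 1 - π / 2 ∈ Set.Icc (fDS 1) (fDS 5) := by
    constructor
    · rw [hf1]; linarith
    · linarith
  obtain ⟨a, ha, hfa⟩ := intermediate_value_Icc (by norm_num : (1:ℝ) ≤ 5) hcont hmem
  have hex : ∃ b ∈ Set.Ici (1:ℝ), fDS b = t - 1 - π / 2 := ⟨a, ha.1, hfa⟩
  have hu1 : 1 ≤ uFun t := Function.invFunOn_mem hex
  have hfu' : fDS (uFun t) = t - 1 - π / 2 := Function.invFunOn_eq hex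
  have hfu : Real.sqrt ((uFun t) ^ 2 - 1) + Real.arcsin (1 / (uFun t)) = t - 1 - π / 2 := hfu'
  have hxdef : xFun t = 1 - (uFun t - 1) / t := rfl
  -- dispatch
  rcases le_or_gt t 4.63 with hc1 | hc1
  · exact subcase t c ψ p q (uFun t) (xFun t)
      4.141592 4.63 (1004763/250000) (4520719/1000000) (514801/250000)
      (91567/40000) (1905799/1000000) (1831573/1000000) (362759/200000)
      (401753/500000) (2376793/1000000) (509017/500000) (33579/31250)
      hcdef htlo hc1 hc2sq hc0 hψ0 hψhalf hsin hcos htan hψc hu1 hfu hxdef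
      hp.1 hp.2 hq.1 hq.2 hxp hxq (by norm_num)
  rcases le_or_gt t 4.84 with hc2 | hc2
  · exact subcase t c ψ p q (uFun t) (xFun t)
      4.63 4.84 (2260359/500000) (295973/62500) (567301/250000)
      (77493/31250) (529253/250000) (411273/200000) (2044203/1000000)
      (77447/100000) (2700641/1000000) (220321/250000) (557971/500000)
      hcdef (by linarith) hc2 hc2sq hc0 hψ0 hψhalf hsin hcos htan hψc hu1 hfu hxdef
      hp.1 hp.2 hq.1 hq.2 hxp hxq (by norm_num)
  rcases le_or_gt t 4.95 with hc3 | hc3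
  · exact subcase t c ψ p q (uFun t) (xFun t)
      4.84 4.95 (4735567/1000000) (2423969/500000) (594801/250000)
      (2580817/1000000) (1114337/500000) (1087067/500000) (432829/200000)
      (379737/500000) (288437/100000) (803123/1000000) (112173/100000)
      hcdef (by linarith) hc3 hc2sq hc0 hψ0 hψhalf hsin hcos htan hψc hu1 hfu hxdef
      hp.1 hp.2 hq.1 hq.2 hxp hxq (by norm_num)
  rcases le_or_gt t 4.99 with hc4 | hc4
  · exact subcase t c ψ p q (uFun t) (xFun t)
      4.95 4.99 (4847937/1000000) (4888773/1000000) (604801/250000)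
      (1308869/500000) (2269397/1000000) (2216911/1000000) (441521/200000)
      (756039/1000000) (366609/125000) (782033/1000000) (283289/250000)
      hcdef (by linarith) hc4 hc2sq hc0 hψ0 hψhalf hsin hcos htan hψc hu1 hfu hxdef
      hp.1 hp.2 hq.1 hq.2 hxp hxq (by norm_num)
  · exact subcase t c ψ p q (uFun t) (xFun t)
      4.99 5 (1222193/250000) (9797959/2000000) (607301/250000)
      (1313491/500000) (1139793/500000) (5569/2500) (2218457/1000000)
      (37791/50000) (2938399/1000000) (97431/125000) (569753/500000)
      hcdef (by linarith) ht2 hc2sq hc0 hψ0 hψhalf hsin hcos htan hψc hu1 hfu hxdef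
      hp.1 hp.2 hq.1 hq.2 hxp hxq (by norm_num)
end
end
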